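/- Let f: ℝ³ → ℝ be C², let x ∈ ℝ³ and r > 0. Then r² · ∫_{S²} y · ∇f(x + r y) dσ(y) = ∫₀^{r} s² · ∫_{S²} Δf(x + s y) dσ(y) ds, where Δ is the Laplacian on ℝ³. -/

import Mathlib

open MeasureTheory Real Filter

noncomputable section

abbrev E3 := EuclideanSpace ℝ (Fin 3)

/-- Laplacian of a scalar function on `ℝ³`. -/
def lap (f : E3 → ℝ) (x : E3) : ℝ :=
  ∑ i : Fin 3, fderiv ℝ (fun y => fderiv ℝ f y (EuclideanSpace.single i 1)) x
    (EuclideanSpace.single i 1)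

namespace GaussAux

/-- Spherical coordinates map. -/
def sphCoord (p : ℝ × ℝ) : E3 :=
  (EuclideanSpace.equiv (Fin 3) ℝ).symm
    ![Real.sin p.1 * Real.cos p.2, Real.sin p.1 * Real.sin p.2, Real.cos p.1]

lemma sphCoord_apply (p : ℝ × ℝ) :
    sphCoord p = ![Real.sin p.1 * Real.cos p.2, Real.sin p.1 * Real.sin p.2, Real.cos p.1] := rfl

lemma contDiff_sphCoord : ContDiff ℝ 1 sphCoord := by
  apply (EuclideanSpace.equiv (Fin 3) ℝ).symm.contDiff.comp
  apply contDiff_pi.2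
  intro i
  fin_cases i <;> simp only [Matrix.cons_val_zero, Matrix.cons_val_one, Matrix.head_cons,
    Matrix.cons_val_two, Matrix.tail_cons]
  · exact (Real.contDiff_sin.comp contDiff_fst).mul (Real.contDiff_cos.comp contDiff_snd)
  · exact (Real.contDiff_sin.comp contDiff_fst).mul (Real.contDiff_sin.comp contDiff_snd)
  · exact Real.contDiff_cos.comp contDiff_fst

lemma exists_lipschitz : ∃ K : NNReal, LipschitzOnWith K sphCoord (Metric.closedBall 0 5) := by
  have hco : Continuous (fun p => ‖fderiv ℝ sphCoord p‖) :=
    (contDiff_sphCoord.continuous_fderiv one_ne_zero).norm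
  obtain ⟨C, hC⟩ := (isCompact_closedBall (0 : ℝ × ℝ) 5).exists_bound_of_continuousOn
    hco.continuousOn
  refine ⟨⟨max C 0, le_max_right _ _⟩, ?_⟩
  apply Convex.lipschitzOnWith_of_nnnorm_fderiv_le
    (fun p _ => (contDiff_sphCoord.differentiable one_ne_zero).differentiableAt)
    ?_ (convex_closedBall _ _)
  intro p hp
  show ((‖fderiv ℝ sphCoord p‖₊ : NNReal) : ℝ) ≤ max C 0
  rw [coe_nnnorm]
  exact le_trans (by simpa using hC p hp) (le_max_left _ _)

lemma sphere_subset_image :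
    Metric.sphere (0 : E3) 1 ⊆ sphCoord '' (Metric.closedBall 0 5) := by
  intro y hy
  have hnorm : ‖y‖ = 1 := by simpa using hy
  have hsum : (y 0) ^ 2 + (y 1) ^ 2 + (y 2) ^ 2 = 1 := by
    have := EuclideanSpace.norm_eq y
    rw [hnorm] at this
    have h2 : (1:ℝ) = Real.sqrt (∑ i : Fin 3, ‖y i‖ ^ 2) := this
    have h3 : (∑ i : Fin 3, ‖y i‖ ^ 2) = 1 := by
      have hnn : (0:ℝ) ≤ ∑ i : Fin 3, ‖y i‖ ^ 2 :=
        Finset.sum_nonneg fun i _ => sq_nonneg _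
      nlinarith [Real.sq_sqrt hnn]
    simpa [Fin.sum_univ_three, Real.norm_eq_abs, sq_abs] using h3
  have hy2 : (y 2) ^ 2 ≤ 1 := by nlinarith [sq_nonneg (y 0), sq_nonneg (y 1)]
  have hy2a : -1 ≤ y 2 := by nlinarith
  have hy2b : y 2 ≤ 1 := by nlinarith
  set θ := Real.arccos (y 2) with hθ
  have hcos : Real.cos θ = y 2 := Real.cos_arccos hy2a hy2b
  have hsin : Real.sin θ = Real.sqrt (1 - (y 2) ^ 2) := Real.sin_arccos _
  have hrho : Real.sin θ = Real.sqrt ((y 0) ^ 2 + (y 1) ^ 2) := by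
    rw [hsin]; congr 1; nlinarith
  have hθmem : θ ∈ Set.Icc 0 π := ⟨Real.arccos_nonneg _, Real.arccos_le_pi _⟩
  by_cases hz : (y 0) ^ 2 + (y 1) ^ 2 = 0
  · have h0 : y 0 = 0 := by nlinarith [sq_nonneg (y 0), sq_nonneg (y 1)]
    have h1 : y 1 = 0 := by nlinarith [sq_nonneg (y 0), sq_nonneg (y 1)]
    refine ⟨(θ, 0), ?_, ?_⟩
    · rw [Metric.mem_closedBall, dist_zero_right, Prod.norm_def]
      simp only [norm_zero]
      have : |θ| ≤ 5 := by
        rw [abs_of_nonneg hθmem.1]; linarith [hθmem.2, Real.pi_le_four]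
      exact max_le (by simpa [Real.norm_eq_abs] using this) (by norm_num)
    · have hs0 : Real.sin θ = 0 := by rw [hrho, hz]; simp
      apply (EuclideanSpace.equiv (Fin 3) ℝ).injective
      funext i
      fin_cases i <;> simp [sphCoord, hs0, hcos, h0, h1]
  · set ρ := Real.sqrt ((y 0) ^ 2 + (y 1) ^ 2) with hρdef
    have hρpos : 0 < ρ := Real.sqrt_pos.2 (lt_of_le_of_ne (by positivity) (Ne.symm hz))
    set z : ℂ := ⟨y 0, y 1⟩ with hzdef
    have hzne : z ≠ 0 := by
      intro h
      apply hz
      have h0 : y 0 = 0 := congrArg Complex.re h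
      have h1 : y 1 = 0 := congrArg Complex.im h
      rw [h0, h1]; ring
    have habs : ‖z‖ = ρ := by
      rw [Complex.norm_def, Complex.normSq_mk]; rw [hρdef]; ring_nf
    refine ⟨(θ, Complex.arg z), ?_, ?_⟩
    · rw [Metric.mem_closedBall, dist_zero_right, Prod.norm_def]
      have h1 : |θ| ≤ 5 := by
        rw [abs_of_nonneg hθmem.1]; linarith [hθmem.2, Real.pi_le_four]
      have h2 : |Complex.arg z| ≤ 5 :=
        le_trans (Complex.abs_arg_le_pi z) (by linarith [Real.pi_le_four])
      simpa [Real.norm_eq_abs] using max_le h1 h2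
    · have hcarg : Real.cos (Complex.arg z) = y 0 / ρ := by
        rw [Complex.cos_arg hzne, habs]
      have hsarg : Real.sin (Complex.arg z) = y 1 / ρ := by
        rw [Complex.sin_arg, habs]
      apply (EuclideanSpace.equiv (Fin 3) ℝ).injective
      funext i
      fin_cases i <;>
        simp only [sphCoord, ContinuousLinearEquiv.apply_symm_apply] <;>
        simp [hcos, hrho, ← hρdef, hcarg, hsarg] <;> field_simp

lemma sphere_hausdorff_lt_top : μH[2] (Metric.sphere (0 : E3) 1) < ⊤ := by
  obtain ⟨K, hK⟩ := exists_lipschitz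
  calc μH[2] (Metric.sphere (0 : E3) 1)
      ≤ μH[2] (sphCoord '' (Metric.closedBall 0 5)) := measure_mono sphere_subset_image
    _ ≤ (K : ENNReal) ^ (2:ℝ) * μH[2] (Metric.closedBall (0:ℝ×ℝ) 5) :=
        hK.hausdorffMeasure_image_le (by norm_num)
    _ < ⊤ := by
        rw [MeasureTheory.hausdorffMeasure_prod_real]
        exact ENNReal.mul_lt_top
          (ENNReal.rpow_lt_top_of_nonneg (by norm_num) ENNReal.coe_ne_top)
          (isCompact_closedBall _ _).measure_lt_top




/-- Rotation by angle `t` in the plane of coordinates `a`, `b`. -/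
def rotAux (a b : Fin 3) (t : ℝ) (y : E3) : E3 :=
  y + (Real.cos t * y a - Real.sin t * y b - y a) • EuclideanSpace.single a 1
    + (Real.sin t * y a + Real.cos t * y b - y b) • EuclideanSpace.single b 1

lemma rotAux_apply_a {a b : Fin 3} (hab : a ≠ b) (t : ℝ) (y : E3) :
    rotAux a b t y a = Real.cos t * y a - Real.sin t * y b := by
  simp [rotAux, PiLp.add_apply, PiLp.smul_apply, EuclideanSpace.single_apply, hab, hab.symm,
    smul_eq_mul]

lemma rotAux_apply_b {a b : Fin 3} (hab : a ≠ b) (t : ℝ) (y : E3) :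
    rotAux a b t y b = Real.sin t * y a + Real.cos t * y b := by
  simp [rotAux, PiLp.add_apply, PiLp.smul_apply, EuclideanSpace.single_apply, hab, hab.symm,
    smul_eq_mul]

lemma rotAux_apply_other {a b k : Fin 3} (hka : k ≠ a) (hkb : k ≠ b) (t : ℝ) (y : E3) :
    rotAux a b t y k = y k := by
  simp [rotAux, PiLp.add_apply, PiLp.smul_apply, EuclideanSpace.single_apply, hka, hkb]

lemma rotAux_zero (a b : Fin 3) (y : E3) : rotAux a b 0 y = y := by
  simp [rotAux]

lemma rotAux_sq_sum {a b : Fin 3} (hab : a ≠ b) (t : ℝ) (y : E3) :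
    ∑ k : Fin 3, (rotAux a b t y k) ^ 2 = ∑ k : Fin 3, (y k) ^ 2 := by
  have key : ∀ z : E3, (∑ k : Fin 3, (z k) ^ 2)
      = (z a) ^ 2 + ((z b) ^ 2 + ∑ k ∈ (Finset.univ.erase a).erase b, (z k) ^ 2) := by
    intro z
    rw [← Finset.add_sum_erase _ _ (Finset.mem_univ a)]
    congr 1
    rw [← Finset.add_sum_erase _ _ (Finset.mem_erase.2 ⟨hab.symm, Finset.mem_univ b⟩)]
  rw [key, key]
  have h1 : ∀ k ∈ (Finset.univ.erase a).erase b, (rotAux a b t y k) ^ 2 = (y k) ^ 2 := by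
    intro k hk
    rw [Finset.mem_erase] at hk
    obtain ⟨hkb, hk2⟩ := hk
    rw [Finset.mem_erase] at hk2
    rw [rotAux_apply_other hk2.1 hkb]
  rw [Finset.sum_congr rfl h1, rotAux_apply_a hab, rotAux_apply_b hab]
  have := Real.sin_sq_add_cos_sq t
  nlinarith [this]

lemma rotAux_leftinv {a b : Fin 3} (hab : a ≠ b) (t : ℝ) (y : E3) :
    rotAux a b (-t) (rotAux a b t y) = y := by
  have hst := Real.sin_sq_add_cos_sq t
  ext k
  by_cases hka : k = a
  · subst hka
    rw [rotAux_apply_a hab, rotAux_apply_a hab, rotAux_apply_b hab,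
      Real.cos_neg, Real.sin_neg]
    linear_combination y k * hst
  · by_cases hkb : k = b
    · subst hkb
      rw [rotAux_apply_b hab, rotAux_apply_a hab, rotAux_apply_b hab,
        Real.cos_neg, Real.sin_neg]
      linear_combination y k * hst
    · simp only [rotAux_apply_other hka hkb]

/-- The rotation as a linear isometry equivalence. -/
def rotL (a b : Fin 3) (hab : a ≠ b) (t : ℝ) : E3 ≃ₗᵢ[ℝ] E3 where
  toFun := rotAux a b t
  invFun := rotAux a b (-t)
  map_add' y z := by
    show rotAux a b t (y + z) = rotAux a b t y + rotAux a b t z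
    unfold rotAux
    rw [PiLp.add_apply, PiLp.add_apply]
    module
  map_smul' c y := by
    show rotAux a b t (c • y) = c • rotAux a b t y
    unfold rotAux
    rw [PiLp.smul_apply, PiLp.smul_apply, smul_eq_mul, smul_eq_mul]
    module
  left_inv y := rotAux_leftinv hab t y
  right_inv y := by
    have := rotAux_leftinv hab (-t) y
    rwa [neg_neg] at this
  norm_map' y := by
    rw [EuclideanSpace.norm_eq, EuclideanSpace.norm_eq]
    congr 1
    simpa [Real.norm_eq_abs, sq_abs] using rotAux_sq_sum hab t y

lemma rotL_apply (a b : Fin 3) (hab : a ≠ b) (t : ℝ) (y : E3) :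
    rotL a b hab t y = rotAux a b t y := rfl

lemma continuous_rotAux (a b : Fin 3) :
    Continuous (fun p : ℝ × E3 => rotAux a b p.1 p.2) := by
  unfold rotAux
  fun_prop

end GaussAux
section T3
open GaussAux

namespace GaussAux

local notation "S2" => Metric.sphere (0 : E3) 1

lemma measurableSet_S2 : MeasurableSet S2 := Metric.isClosed_sphere.measurableSet

instance : IsFiniteMeasure ((μH[2] : Measure E3).restrict S2) :=
  ⟨by rw [Measure.restrict_apply_univ]; exact sphere_hausdorff_lt_top⟩

lemma integrableOn_sphere (F : E3 → ℝ) (hF : Continuous F) :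
    IntegrableOn F S2 (μH[2] : Measure E3) := by
  obtain ⟨C, hC⟩ := (isCompact_sphere (0 : E3) 1).exists_bound_of_continuousOn
    hF.continuousOn
  refine ⟨hF.aestronglyMeasurable.restrict, ?_⟩
  apply MeasureTheory.HasFiniteIntegral.of_bounded (C := C)
  filter_upwards [ae_restrict_mem measurableSet_S2] with y hy
  exact hC y hy

/-- Change of variables by a linear isometry preserving the sphere. -/
lemma integral_comp_isometry (e : E3 ≃ₗᵢ[ℝ] E3) (F : E3 → ℝ) :
    ∫ y in S2, F (e y) ∂(μH[2] : Measure E3) = ∫ y in S2, F y ∂(μH[2] : Measure E3) := by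
  have hiso : Isometry e := e.isometry
  have hmapμ : Measure.map (e : E3 → E3) (μH[2] : Measure E3) = μH[2] :=
    e.toIsometryEquiv.map_hausdorffMeasure 2
  have hpre : (e : E3 → E3) ⁻¹' S2 = S2 := by
    ext y
    simp only [Set.mem_preimage, Metric.mem_sphere, dist_zero_right]
    rw [e.norm_map]
  have hme : Measurable (e : E3 → E3) := hiso.continuous.measurable
  have key : (μH[2] : Measure E3).restrict S2
      = Measure.map (e : E3 → E3) ((μH[2] : Measure E3).restrict S2) := by
    conv_lhs => rw [← hmapμ]
    rw [Measure.restrict_map hme measurableSet_S2, hpre]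
  have := MeasureTheory.integral_map_equiv
    (e.toIsometryEquiv.toHomeomorph.toMeasurableEquiv) F
    (μ := (μH[2] : Measure E3).restrict S2)
  calc ∫ y in S2, F (e y) ∂(μH[2] : Measure E3)
      = ∫ y, F (e.toIsometryEquiv.toHomeomorph.toMeasurableEquiv y)
          ∂((μH[2] : Measure E3).restrict S2) := rfl
    _ = ∫ z, F z ∂(Measure.map (e.toIsometryEquiv.toHomeomorph.toMeasurableEquiv)
          ((μH[2] : Measure E3).restrict S2)) := (this).symm
    _ = ∫ y in S2, F y ∂(μH[2] : Measure E3) := by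
        rw [show (Measure.map (e.toIsometryEquiv.toHomeomorph.toMeasurableEquiv)
            ((μH[2] : Measure E3).restrict S2)) = (μH[2] : Measure E3).restrict S2 from key.symm]

/-- Fubini on the sphere times a time interval, for jointly continuous integrands. -/
lemma sphere_fubini (c : ℝ) (q : ℝ → E3 → ℝ)
    (hq : Continuous fun p : E3 × ℝ => q p.2 p.1) :
    ∫ y in S2, (∫ t in Set.Ioc 0 c, q t y) ∂(μH[2] : Measure E3)
      = ∫ t in Set.Ioc 0 c, (∫ y in S2, q t y ∂(μH[2] : Measure E3)) := by
  set ν := (μH[2] : Measure E3).restrict S2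
  set τ := (volume : Measure ℝ).restrict (Set.Ioc 0 c)
  have : IsFiniteMeasure τ := ⟨by
    rw [Measure.restrict_apply_univ]
    exact lt_of_le_of_lt (le_of_eq (Real.volume_Ioc)) ENNReal.ofReal_lt_top⟩
  have hK : IsCompact ((Metric.sphere (0:E3) 1) ×ˢ Set.Icc 0 c) :=
    (isCompact_sphere _ _).prod isCompact_Icc
  obtain ⟨C, hC⟩ := hK.exists_bound_of_continuousOn hq.continuousOn
  have h1 : ∀ᵐ p ∂(ν.prod τ), p.1 ∈ S2 := by
    rw [ae_iff]
    have hset : {p : E3 × ℝ | ¬p.1 ∈ S2} = (S2ᶜ ×ˢ Set.univ) := by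
      ext p; simp [Set.mem_prod]
    rw [hset, Measure.prod_prod]
    have : ν S2ᶜ = 0 := by
      rw [Measure.restrict_apply measurableSet_S2.compl]
      simp
    rw [this, zero_mul]
  have h2 : ∀ᵐ p ∂(ν.prod τ), p.2 ∈ Set.Icc 0 c := by
    rw [ae_iff]
    have hset : {p : E3 × ℝ | ¬p.2 ∈ Set.Icc 0 c} = (Set.univ ×ˢ (Set.Icc 0 c)ᶜ) := by
      ext p; simp [Set.mem_prod]
    rw [hset, Measure.prod_prod]
    have : τ (Set.Icc 0 c)ᶜ = 0 := by
      rw [Measure.restrict_apply measurableSet_Icc.compl]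
      have : (Set.Icc 0 c)ᶜ ∩ Set.Ioc 0 c = ∅ := by
        ext t; simp only [Set.mem_inter_iff, Set.mem_compl_iff, Set.mem_Icc, Set.mem_Ioc,
          Set.mem_empty_iff_false, iff_false]
        rintro ⟨h, h3, h4⟩; exact h ⟨le_of_lt h3, h4⟩
      rw [this]; simp
    rw [this, mul_zero]
  have hint : Integrable (Function.uncurry fun (y : E3) (t : ℝ) => q t y) (ν.prod τ) := by
    constructor
    · exact (hq.comp continuous_id).aestronglyMeasurable
    · apply MeasureTheory.HasFiniteIntegral.of_bounded (C := C)
      filter_upwards [h1, h2] with p hp1 hp2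
      exact hC (p.1, p.2) ⟨hp1, hp2⟩
  exact MeasureTheory.integral_integral_swap hint

end GaussAux
end T3
section T4
namespace GaussAux

local notation "S2" => Metric.sphere (0 : E3) 1

/-- `i`-th partial derivative. -/
def pd (g : E3 → ℝ) (i : Fin 3) (z : E3) : ℝ := fderiv ℝ g z (EuclideanSpace.single i 1)

lemma continuous_pd (g : E3 → ℝ) (hg : ContDiff ℝ 1 g) (i : Fin 3) :
    Continuous (pd g i) :=
  (hg.continuous_fderiv one_ne_zero).clm_apply continuous_const

lemma hasDerivAt_rotAux {a b : Fin 3} (hab : a ≠ b) (y : E3) (t : ℝ) :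
    HasDerivAt (fun t => rotAux a b t y)
      ((-(rotAux a b t y b)) • EuclideanSpace.single a 1
        + (rotAux a b t y a) • EuclideanSpace.single b 1) t := by
  have h1 : HasDerivAt (fun t => Real.cos t * y a - Real.sin t * y b - y a)
      (-Real.sin t * y a - Real.cos t * y b) t :=
    (((Real.hasDerivAt_cos t).mul_const (y a)).sub
      ((Real.hasDerivAt_sin t).mul_const (y b))).sub_const (y a)
  have h2 : HasDerivAt (fun t => Real.sin t * y a + Real.cos t * y b - y b)
      (Real.cos t * y a + -Real.sin t * y b) t :=
    (((Real.hasDerivAt_sin t).mul_const (y a)).add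
      ((Real.hasDerivAt_cos t).mul_const (y b))).sub_const (y b)
  have h3 := ((hasDerivAt_const t y).add
      (h1.smul_const (EuclideanSpace.single a (1:ℝ)))).add
      (h2.smul_const (EuclideanSpace.single b (1:ℝ)))
  have heq : (0 : E3) + (-Real.sin t * y a - Real.cos t * y b) •
        EuclideanSpace.single a (1:ℝ)
        + (Real.cos t * y a + -Real.sin t * y b) • EuclideanSpace.single b (1:ℝ)
      = (-(rotAux a b t y b)) • EuclideanSpace.single a 1
        + (rotAux a b t y a) • EuclideanSpace.single b 1 := by
    rw [rotAux_apply_a hab, rotAux_apply_b hab]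
    module
  rw [heq] at h3
  exact h3

lemma rot_ibp {a b : Fin 3} (hab : a ≠ b) (g : E3 → ℝ) (hg : ContDiff ℝ 1 g) :
    ∫ y in S2, (y a * pd g b y - y b * pd g a y) ∂(μH[2] : Measure E3) = 0 := by
  set φ : E3 → ℝ := fun z => z a * pd g b z - z b * pd g a z with hφdef
  have hφcont : Continuous φ := by
    apply Continuous.sub
    · exact ((continuous_apply a).comp (PiLp.continuous_ofLp 2 _)).mul
        (continuous_pd g hg b)
    · exact ((continuous_apply b).comp (PiLp.continuous_ofLp 2 _)).mul
        (continuous_pd g hg a)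
  -- pointwise FTC
  have hFTC : ∀ y : E3, g (rotAux a b 1 y) - g y
      = ∫ t in (0:ℝ)..1, φ (rotAux a b t y) := by
    intro y
    have hder : ∀ t ∈ Set.uIcc (0:ℝ) 1,
        HasDerivAt (fun t => g (rotAux a b t y)) (φ (rotAux a b t y)) t := by
      intro t _
      have hrot := hasDerivAt_rotAux hab y t
      have hchain := ((hg.differentiable one_ne_zero) (rotAux a b t y)).hasFDerivAt.comp_hasDerivAt
        t hrot
      have : fderiv ℝ g (rotAux a b t y)
          ((-(rotAux a b t y b)) • EuclideanSpace.single a 1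
            + (rotAux a b t y a) • EuclideanSpace.single b 1)
          = φ (rotAux a b t y) := by
        rw [map_add, ContinuousLinearMap.map_smul, ContinuousLinearMap.map_smul, smul_eq_mul, smul_eq_mul]
        simp only [hφdef, pd]
        ring
      rwa [this] at hchain
    have hcont : Continuous fun t => φ (rotAux a b t y) :=
      hφcont.comp ((continuous_rotAux a b).comp (continuous_id.prodMk continuous_const))
    have := intervalIntegral.integral_eq_sub_of_hasDerivAt hder
      (hcont.intervalIntegrable 0 1)
    rw [this, rotAux_zero]
  -- invariance kills the left side
  have hrotint : ∀ t : ℝ, ∫ y in S2, φ (rotAux a b t y) ∂(μH[2] : Measure E3)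
      = ∫ y in S2, φ y ∂(μH[2] : Measure E3) := fun t =>
    integral_comp_isometry (rotL a b hab t) φ
  have hginv : ∫ y in S2, g (rotAux a b 1 y) ∂(μH[2] : Measure E3)
      = ∫ y in S2, g y ∂(μH[2] : Measure E3) :=
    integral_comp_isometry (rotL a b hab 1) g
  have hgrotcont : Continuous fun y => g (rotAux a b 1 y) :=
    hg.continuous.comp ((continuous_rotAux a b).comp (continuous_const.prodMk continuous_id))
  have hzero : ∫ y in S2, (g (rotAux a b 1 y) - g y) ∂(μH[2] : Measure E3) = 0 := by
    rw [integral_sub (integrableOn_sphere _ hgrotcont) (integrableOn_sphere _ hg.continuous),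
      hginv, sub_self]
  have hcont2 : Continuous fun p : E3 × ℝ => φ (rotAux a b p.2 p.1) :=
    hφcont.comp ((continuous_rotAux a b).comp (continuous_snd.prodMk continuous_fst))
  have hswap := sphere_fubini 1 (fun t y => φ (rotAux a b t y)) hcont2
  have hIoc : ∀ y : E3, (∫ t in (0:ℝ)..1, φ (rotAux a b t y))
      = ∫ t in Set.Ioc (0:ℝ) 1, φ (rotAux a b t y) := fun y =>
    intervalIntegral.integral_of_le zero_le_one
  have hstep : ∫ y in S2, (g (rotAux a b 1 y) - g y) ∂(μH[2] : Measure E3)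
      = ∫ y in S2, φ y ∂(μH[2] : Measure E3) := by
    calc ∫ y in S2, (g (rotAux a b 1 y) - g y) ∂(μH[2] : Measure E3)
        = ∫ y in S2, (∫ t in Set.Ioc (0:ℝ) 1, φ (rotAux a b t y)) ∂(μH[2] : Measure E3) := by
          apply integral_congr_ae
          filter_upwards with y
          rw [hFTC y, hIoc y]
      _ = ∫ t in Set.Ioc (0:ℝ) 1, (∫ y in S2, φ (rotAux a b t y) ∂(μH[2] : Measure E3)) :=
          hswap
      _ = ∫ t in Set.Ioc (0:ℝ) 1, (∫ y in S2, φ y ∂(μH[2] : Measure E3)) := by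
          apply integral_congr_ae
          filter_upwards with t
          exact hrotint t
      _ = ∫ y in S2, φ y ∂(μH[2] : Measure E3) := by
          rw [setIntegral_const]
          simp [Real.volume_Ioc]
  rw [hstep] at hzero
  exact hzero

end GaussAux
end T4
section T5
namespace GaussAux

local notation "S2" => Metric.sphere (0 : E3) 1

lemma euclid_decomp (y : E3) :
    y = y 0 • EuclideanSpace.single 0 (1:ℝ) + y 1 • EuclideanSpace.single 1 1
      + y 2 • EuclideanSpace.single 2 1 := by
  ext m
  fin_cases m <;>
    simp [PiLp.add_apply, PiLp.smul_apply, EuclideanSpace.single_apply]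

lemma clm_decomp (L : E3 →L[ℝ] ℝ) (y : E3) :
    L y = y 0 * L (EuclideanSpace.single 0 1) + y 1 * L (EuclideanSpace.single 1 1)
      + y 2 * L (EuclideanSpace.single 2 1) := by
  conv_lhs => rw [euclid_decomp y]
  rw [map_add, map_add, ContinuousLinearMap.map_smul, ContinuousLinearMap.map_smul,
    ContinuousLinearMap.map_smul, smul_eq_mul, smul_eq_mul, smul_eq_mul]

lemma sq_sum_sphere {y : E3} (hy : y ∈ S2) :
    (y 0) ^ 2 + (y 1) ^ 2 + (y 2) ^ 2 = 1 := by
  have hnorm : ‖y‖ = 1 := by simpa using hy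
  have := EuclideanSpace.norm_eq y
  rw [hnorm] at this
  have h3 : (∑ i : Fin 3, ‖y i‖ ^ 2) = 1 := by
    have hnn : (0:ℝ) ≤ ∑ i : Fin 3, ‖y i‖ ^ 2 :=
      Finset.sum_nonneg fun i _ => sq_nonneg _
    nlinarith [Real.sq_sqrt hnn, this]
  simpa [Fin.sum_univ_three, Real.norm_eq_abs, sq_abs] using h3

lemma contDiff_coord_mul (w : E3 → ℝ) (hw : ContDiff ℝ 1 w) (j : Fin 3) :
    ContDiff ℝ 1 (fun z : E3 => z j * w z) :=
  (ContinuousLinearMap.contDiff (EuclideanSpace.proj j : E3 →L[ℝ] ℝ)).mul hw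

lemma pd_coord_mul (w : E3 → ℝ) (hw : ContDiff ℝ 1 w) (j m : Fin 3) (y : E3) :
    pd (fun z : E3 => z j * w z) m y
      = y j * pd w m y + w y * (if j = m then (1:ℝ) else 0) := by
  unfold pd
  have hu : DifferentiableAt ℝ (fun z : E3 => z j) y :=
    (EuclideanSpace.proj (𝕜 := ℝ) j).differentiableAt
  have hfd : fderiv ℝ (fun z : E3 => z j) y = EuclideanSpace.proj (𝕜 := ℝ) j :=
    (EuclideanSpace.proj (𝕜 := ℝ) j).fderiv
  rw [fderiv_fun_mul hu ((hw.differentiable one_ne_zero) y), ContinuousLinearMap.add_apply,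
    ContinuousLinearMap.smul_apply, ContinuousLinearMap.smul_apply, hfd]
  have : (EuclideanSpace.proj (𝕜 := ℝ) j) (EuclideanSpace.single m (1:ℝ))
      = (if j = m then (1:ℝ) else 0) := by
    simp [EuclideanSpace.single_apply]
  rw [this]
  simp [smul_eq_mul]

lemma sphere_ibp_aux (w : E3 → ℝ) (hw : ContDiff ℝ 1 w) (i j k : Fin 3)
    (hji : j ≠ i) (hki : k ≠ i)
    (hperm : ∀ v u : Fin 3 → ℝ, v i * u i + v j * u j + v k * u k
      = v 0 * u 0 + v 1 * u 1 + v 2 * u 2)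
    (hsq : ∀ y : E3, y ∈ S2 → (y i)^2 + (y j)^2 + (y k)^2 = 1) :
    ∫ y in S2, (pd w i y - y i * (fderiv ℝ w y y) - 2 * y i * w y)
      ∂(μH[2] : Measure E3) = 0 := by
  set g1 : E3 → ℝ := fun z => z j * w z with hg1def
  set g2 : E3 → ℝ := fun z => z k * w z with hg2def
  have hg1 : ContDiff ℝ 1 g1 := contDiff_coord_mul w hw j
  have hg2 : ContDiff ℝ 1 g2 := contDiff_coord_mul w hw k
  have h1 := rot_ibp hji g1 hg1
  have h2 := rot_ibp hki g2 hg2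
  have hcy : ∀ m : Fin 3, Continuous fun y : E3 => y m :=
    fun m => (continuous_apply m).comp (PiLp.continuous_ofLp 2 _)
  have hint1 : IntegrableOn (fun y : E3 => y j * pd g1 i y - y i * pd g1 j y) S2
      (μH[2] : Measure E3) :=
    integrableOn_sphere _ (((hcy j).mul (continuous_pd g1 hg1 i)).sub
      ((hcy i).mul (continuous_pd g1 hg1 j)))
  have hint2 : IntegrableOn (fun y : E3 => y k * pd g2 i y - y i * pd g2 k y) S2
      (μH[2] : Measure E3) :=
    integrableOn_sphere _ (((hcy k).mul (continuous_pd g2 hg2 i)).sub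
      ((hcy i).mul (continuous_pd g2 hg2 k)))
  have hsum : ∫ y in S2, ((y j * pd g1 i y - y i * pd g1 j y)
      + (y k * pd g2 i y - y i * pd g2 k y)) ∂(μH[2] : Measure E3) = 0 := by
    rw [integral_add hint1 hint2, h1, h2, add_zero]
  rw [← hsum]
  apply setIntegral_congr_fun measurableSet_S2
  intro y hy
  have e1 : pd g1 i y = y j * pd w i y := by
    rw [hg1def, pd_coord_mul w hw j i y, if_neg hji]; ring
  have e2 : pd g1 j y = y j * pd w j y + w y := by
    rw [hg1def, pd_coord_mul w hw j j y, if_pos rfl]; ring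
  have e3 : pd g2 i y = y k * pd w i y := by
    rw [hg2def, pd_coord_mul w hw k i y, if_neg hki]; ring
  have e4 : pd g2 k y = y k * pd w k y + w y := by
    rw [hg2def, pd_coord_mul w hw k k y, if_pos rfl]; ring
  have hexp : fderiv ℝ w y y = y i * pd w i y + y j * pd w j y + y k * pd w k y := by
    rw [clm_decomp (fderiv ℝ w y) y]
    exact (hperm (fun m => y m) (fun m => pd w m y)).symm
  simp only [e1, e2, e3, e4, hexp]
  have hs := hsq y hy
  linear_combination (-(pd w i y)) * hs

end GaussAux
end T5
section T6
namespace GaussAux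

local notation "S2" => Metric.sphere (0 : E3) 1

lemma sphere_ibp (w : E3 → ℝ) (hw : ContDiff ℝ 1 w) (i : Fin 3) :
    ∫ y in S2, (pd w i y - y i * (fderiv ℝ w y y) - 2 * y i * w y)
      ∂(μH[2] : Measure E3) = 0 := by
  fin_cases i
  · exact sphere_ibp_aux w hw 0 1 2 (by decide) (by decide)
      (fun v u => by ring) (fun y hy => by have := sq_sum_sphere hy; linarith)
  · exact sphere_ibp_aux w hw 1 0 2 (by decide) (by decide)
      (fun v u => by ring) (fun y hy => by have := sq_sum_sphere hy; linarith)
  · exact sphere_ibp_aux w hw 2 0 1 (by decide) (by decide)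
      (fun v u => by ring) (fun y hy => by have := sq_sum_sphere hy; linarith)

lemma continuous_coord (m : Fin 3) : Continuous fun y : E3 => y m :=
  (continuous_apply m).comp (PiLp.continuous_ofLp 2 _)

/-- The scaled sphere integration-by-parts identity. -/
lemma scaled_ibp (gi : E3 → ℝ) (hgi : ContDiff ℝ 1 gi) (s : ℝ) (i : Fin 3) :
    ∫ y in S2, (2*s*(y i)*gi (s • y) + s^2*(y i)*((fderiv ℝ gi (s • y)) y))
        ∂(μH[2] : Measure E3)
      = ∫ y in S2, (s^2 * (fderiv ℝ gi (s • y)) (EuclideanSpace.single i 1))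
        ∂(μH[2] : Measure E3) := by
  set w : E3 → ℝ := fun z => gi (s • z) with hwdef
  have hw : ContDiff ℝ 1 w := hgi.comp (contDiff_id.const_smul s)
  have hwfd : ∀ y : E3, fderiv ℝ w y
      = (fderiv ℝ gi (s • y)).comp (s • ContinuousLinearMap.id ℝ E3) := by
    intro y
    have hin : HasFDerivAt (fun z : E3 => s • z) (s • ContinuousLinearMap.id ℝ E3) y :=
      (hasFDerivAt_id y).const_smul s
    exact (((hgi.differentiable one_ne_zero) (s • y)).hasFDerivAt.comp y hin).fderiv
  have hpdw : ∀ y : E3, pd w i y = s * (fderiv ℝ gi (s • y)) (EuclideanSpace.single i 1) := by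
    intro y
    rw [pd, hwfd y]
    simp [ContinuousLinearMap.comp_apply, ContinuousLinearMap.smul_apply,
      ContinuousLinearMap.id_apply, smul_eq_mul]
  have hfdw : ∀ y : E3, fderiv ℝ w y y = s * (fderiv ℝ gi (s • y)) y := by
    intro y
    rw [hwfd y]
    simp [ContinuousLinearMap.comp_apply, ContinuousLinearMap.smul_apply,
      ContinuousLinearMap.id_apply, smul_eq_mul]
  have key : ∀ y : E3, s * (pd w i y - y i * (fderiv ℝ w y y) - 2 * y i * w y)
      = s^2 * (fderiv ℝ gi (s • y)) (EuclideanSpace.single i 1)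
        - (2*s*(y i)*gi (s • y) + s^2*(y i)*((fderiv ℝ gi (s • y)) y)) := by
    intro y
    rw [hpdw y, hfdw y]
    show s * (_ - _ - 2 * y i * gi (s • y)) = _
    ring
  have hcfd : Continuous fun y : E3 => fderiv ℝ gi (s • y) :=
    (hgi.continuous_fderiv one_ne_zero).comp (continuous_id.const_smul s)
  have hcA : Continuous fun y : E3 => (fderiv ℝ gi (s • y)) (EuclideanSpace.single i 1) :=
    hcfd.clm_apply continuous_const
  have hcB : Continuous fun y : E3 => (fderiv ℝ gi (s • y)) y :=
    hcfd.clm_apply continuous_id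
  have hcC : Continuous fun y : E3 => gi (s • y) :=
    hgi.continuous.comp (continuous_id.const_smul s)
  have h1 : ∫ y in S2,
      (s^2 * (fderiv ℝ gi (s • y)) (EuclideanSpace.single i 1)
        - (2*s*(y i)*gi (s • y) + s^2*(y i)*((fderiv ℝ gi (s • y)) y)))
      ∂(μH[2] : Measure E3) = 0 := by
    have e1 : ∫ y in S2,
        (s^2 * (fderiv ℝ gi (s • y)) (EuclideanSpace.single i 1)
          - (2*s*(y i)*gi (s • y) + s^2*(y i)*((fderiv ℝ gi (s • y)) y)))
        ∂(μH[2] : Measure E3)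
        = ∫ y in S2, s * (pd w i y - y i * (fderiv ℝ w y y) - 2 * y i * w y)
          ∂(μH[2] : Measure E3) := by
      apply setIntegral_congr_fun measurableSet_S2
      intro y _
      exact (key y).symm
    rw [e1, MeasureTheory.integral_const_mul, sphere_ibp w hw i, mul_zero]
  have hiA : IntegrableOn
      (fun y : E3 => s^2 * (fderiv ℝ gi (s • y)) (EuclideanSpace.single i 1)) S2
      (μH[2] : Measure E3) := integrableOn_sphere _ (continuous_const.mul hcA)
  have hiB : IntegrableOn
      (fun y : E3 => 2*s*(y i)*gi (s • y) + s^2*(y i)*((fderiv ℝ gi (s • y)) y)) S2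
      (μH[2] : Measure E3) := by
    apply integrableOn_sphere
    exact (((continuous_const.mul (continuous_coord i)).mul hcC)).add
      ((continuous_const.mul (continuous_coord i)).mul hcB)
  rw [integral_sub hiA hiB, sub_eq_zero] at h1
  exact h1.symm

lemma ftc_radial (gi : E3 → ℝ) (hgi : ContDiff ℝ 1 gi) (i : Fin 3) (y : E3) (r : ℝ) :
    r^2 * (y i) * gi (r • y)
      = ∫ s in (0:ℝ)..r, (2*s*(y i)*gi (s • y) + s^2*(y i)*((fderiv ℝ gi (s • y)) y)) := by
  have hder : ∀ s ∈ Set.uIcc (0:ℝ) r,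
      HasDerivAt (fun s : ℝ => s^2*(y i)*gi (s • y))
        (2*s*(y i)*gi (s • y) + s^2*(y i)*((fderiv ℝ gi (s • y)) y)) s := by
    intro s _
    have hsm : HasDerivAt (fun s : ℝ => s • y) y s := by
      simpa using (hasDerivAt_id s).smul_const y
    have hv : HasDerivAt (fun s : ℝ => gi (s • y)) ((fderiv ℝ gi (s • y)) y) s :=
      ((hgi.differentiable one_ne_zero) (s • y)).hasFDerivAt.comp_hasDerivAt s hsm
    have hu : HasDerivAt (fun s : ℝ => s^2*(y i)) (2*s*(y i)) s := by
      have h := (hasDerivAt_pow 2 s).mul_const (y i)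
      simpa using h
    have h2 := hu.mul hv
    exact h2
  have hcont : Continuous fun s : ℝ =>
      (2*s*(y i)*gi (s • y) + s^2*(y i)*((fderiv ℝ gi (s • y)) y)) := by
    have hsm : Continuous fun s : ℝ => s • y := continuous_id.smul continuous_const
    have hC : Continuous fun s : ℝ => gi (s • y) := hgi.continuous.comp hsm
    have hB : Continuous fun s : ℝ => (fderiv ℝ gi (s • y)) y :=
      ((hgi.continuous_fderiv one_ne_zero).comp hsm).clm_apply continuous_const
    exact (((continuous_const.mul continuous_id).mul continuous_const).mul hC).add
      (((continuous_pow 2).mul continuous_const).mul hB)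
  rw [intervalIntegral.integral_eq_sub_of_hasDerivAt hder (hcont.intervalIntegrable 0 r)]
  norm_num

end GaussAux
end T6
section T7
namespace GaussAux

local notation "S2" => Metric.sphere (0 : E3) 1

lemma continuous_radial_integrand (gi : E3 → ℝ) (hgi : ContDiff ℝ 1 gi) (i : Fin 3) (y : E3) :
    Continuous fun s : ℝ =>
      (2*s*(y i)*gi (s • y) + s^2*(y i)*((fderiv ℝ gi (s • y)) y)) := by
  have hsm : Continuous fun s : ℝ => s • y := continuous_id.smul continuous_const
  have hC : Continuous fun s : ℝ => gi (s • y) := hgi.continuous.comp hsm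
  have hB : Continuous fun s : ℝ => (fderiv ℝ gi (s • y)) y :=
    ((hgi.continuous_fderiv one_ne_zero).comp hsm).clm_apply continuous_const
  exact (((continuous_const.mul continuous_id).mul continuous_const).mul hC).add
    (((continuous_pow 2).mul continuous_const).mul hB)

end GaussAux
end T7

open GaussAux

section Main

local notation "S2" => Metric.sphere (0 : E3) 1

/-- Gauss' theorem for spherical means:
`r² ∫_{S²} y·∇f(x+ry) dσ(y) = ∫₀^r s² ∫_{S²} Δf(x+sy) dσ(y) ds`. -/
theorem gauss_spherical_mean (f : E3 → ℝ) (hf : ContDiff ℝ 2 f)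
    (x : E3) (r : ℝ) (hr : 0 < r) :
    r ^ 2 * (∫ y in Metric.sphere (0 : E3) 1,
        (inner ℝ y (gradient f (x + r • y)) : ℝ) ∂(μH[2]))
      = ∫ s in (0:ℝ)..r, s ^ 2 *
          ∫ y in Metric.sphere (0 : E3) 1, lap f (x + s • y) ∂(μH[2]) := by
  classical
  have hFi : ContDiff ℝ 1 (fderiv ℝ f) := hf.fderiv_right (by norm_num)
  set G : Fin 3 → E3 → ℝ :=
    fun i z => fderiv ℝ f (x + z) (EuclideanSpace.single i 1) with hGdef
  have hG : ∀ i, ContDiff ℝ 1 (G i) := fun i =>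
    (hFi.clm_apply contDiff_const).comp (contDiff_const.add contDiff_id)
  have hGfd : ∀ (i : Fin 3) (u : E3), fderiv ℝ (G i) u
      = fderiv ℝ (fun w => fderiv ℝ f w (EuclideanSpace.single i 1)) (x + u) := by
    intro i u
    have hFi' : DifferentiableAt ℝ (fun w => fderiv ℝ f w (EuclideanSpace.single i 1))
        (x + u) := ((hFi.clm_apply contDiff_const).differentiable one_ne_zero) (x + u)
    have hadd : HasFDerivAt (fun z : E3 => x + z) (ContinuousLinearMap.id ℝ E3) u :=
      (hasFDerivAt_id u).const_add x
    have hcomp : HasFDerivAt (G i)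
        ((fderiv ℝ (fun w => fderiv ℝ f w (EuclideanSpace.single i 1)) (x + u)).comp
          (ContinuousLinearMap.id ℝ E3)) u :=
      HasFDerivAt.comp u hFi'.hasFDerivAt hadd
    rw [hcomp.fderiv, ContinuousLinearMap.comp_id]
  have hlap : ∀ (s : ℝ) (y : E3),
      (∑ i : Fin 3, (fderiv ℝ (G i) (s • y)) (EuclideanSpace.single i 1))
        = lap f (x + s • y) := by
    intro s y
    unfold lap
    refine Finset.sum_congr rfl fun i _ => ?_
    rw [hGfd i (s • y)]
  have hinner : ∀ y : E3, (inner ℝ y (gradient f (x + r • y)) : ℝ)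
      = ∑ i : Fin 3, y i * G i (r • y) := by
    intro y
    have h1 : (inner ℝ y (gradient f (x + r • y)) : ℝ) = fderiv ℝ f (x + r • y) y := by
      rw [real_inner_comm]
      exact InnerProductSpace.toDual_symm_apply
    rw [h1, clm_decomp (fderiv ℝ f (x + r • y)) y, Fin.sum_univ_three]
  set q : ℝ → E3 → ℝ := fun s y => ∑ i : Fin 3,
    (2*s*(y i)*G i (s • y) + s^2*(y i)*((fderiv ℝ (G i) (s • y)) y)) with hqdef
  have hqcont : Continuous fun p : E3 × ℝ => q p.2 p.1 := by
    apply continuous_finset_sum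
    intro i _
    have hsm : Continuous fun p : E3 × ℝ => p.2 • p.1 := continuous_snd.smul continuous_fst
    have hGc : Continuous fun p : E3 × ℝ => G i (p.2 • p.1) := (hG i).continuous.comp hsm
    have hfd : Continuous fun p : E3 × ℝ => fderiv ℝ (G i) (p.2 • p.1) :=
      ((hG i).continuous_fderiv one_ne_zero).comp hsm
    have hB : Continuous fun p : E3 × ℝ => (fderiv ℝ (G i) (p.2 • p.1)) p.1 :=
      hfd.clm_apply continuous_fst
    have hcoord : Continuous fun p : E3 × ℝ => p.1 i :=
      (continuous_coord i).comp continuous_fst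
    exact ((((continuous_const.mul continuous_snd).mul hcoord).mul hGc)).add
      ((((continuous_pow 2).comp continuous_snd).mul hcoord).mul hB)
  have hFTC : ∀ y : E3, (∑ i : Fin 3, r^2*(y i)*G i (r • y))
      = ∫ s in Set.Ioc (0:ℝ) r, q s y := by
    intro y
    calc ∑ i : Fin 3, r^2*(y i)*G i (r • y)
        = ∑ i : Fin 3, ∫ s in (0:ℝ)..r,
            (2*s*(y i)*G i (s • y) + s^2*(y i)*((fderiv ℝ (G i) (s • y)) y)) :=
          Finset.sum_congr rfl fun i _ => ftc_radial (G i) (hG i) i y r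
      _ = ∫ s in (0:ℝ)..r, q s y := by
          simp only [hqdef]
          exact (intervalIntegral.integral_finset_sum (fun i _ =>
            (continuous_radial_integrand (G i) (hG i) i y).intervalIntegrable 0 r)).symm
      _ = ∫ s in Set.Ioc (0:ℝ) r, q s y := intervalIntegral.integral_of_le hr.le
  have hinner_s : ∀ s : ℝ, ∫ y in S2, q s y ∂(μH[2] : Measure E3)
      = s^2 * ∫ y in S2, lap f (x + s • y) ∂(μH[2] : Measure E3) := by
    intro s
    have hsm : Continuous fun y : E3 => s • y := continuous_id.const_smul s
    have hint : ∀ i ∈ Finset.univ, IntegrableOn (fun y : E3 =>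
        2*s*(y i)*G i (s • y) + s^2*(y i)*((fderiv ℝ (G i) (s • y)) y)) S2
        (μH[2] : Measure E3) := by
      intro i _
      apply integrableOn_sphere
      have hGc : Continuous fun y : E3 => G i (s • y) := (hG i).continuous.comp hsm
      have hB : Continuous fun y : E3 => (fderiv ℝ (G i) (s • y)) y :=
        (((hG i).continuous_fderiv one_ne_zero).comp hsm).clm_apply continuous_id
      exact (((continuous_const.mul (continuous_coord i)).mul hGc)).add
        ((continuous_const.mul (continuous_coord i)).mul hB)
    have hint2 : ∀ i ∈ Finset.univ, IntegrableOn (fun y : E3 =>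
        s^2 * (fderiv ℝ (G i) (s • y)) (EuclideanSpace.single i 1)) S2
        (μH[2] : Measure E3) := by
      intro i _
      apply integrableOn_sphere
      exact continuous_const.mul ((((hG i).continuous_fderiv one_ne_zero).comp hsm).clm_apply
        continuous_const)
    calc ∫ y in S2, q s y ∂(μH[2] : Measure E3)
        = ∑ i : Fin 3, ∫ y in S2,
            (2*s*(y i)*G i (s • y) + s^2*(y i)*((fderiv ℝ (G i) (s • y)) y))
            ∂(μH[2] : Measure E3) := by
          simp only [hqdef]
          exact integral_finset_sum _ hint
      _ = ∑ i : Fin 3, ∫ y in S2,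
            (s^2 * (fderiv ℝ (G i) (s • y)) (EuclideanSpace.single i 1))
            ∂(μH[2] : Measure E3) :=
          Finset.sum_congr rfl fun i _ => scaled_ibp (G i) (hG i) s i
      _ = ∫ y in S2, (∑ i : Fin 3,
            s^2 * (fderiv ℝ (G i) (s • y)) (EuclideanSpace.single i 1))
            ∂(μH[2] : Measure E3) := (integral_finset_sum _ hint2).symm
      _ = ∫ y in S2, (s^2 * lap f (x + s • y)) ∂(μH[2] : Measure E3) := by
          apply setIntegral_congr_fun measurableSet_S2
          intro y _
          dsimp only
          rw [← hlap s y, Finset.mul_sum]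
      _ = s^2 * ∫ y in S2, lap f (x + s • y) ∂(μH[2] : Measure E3) :=
          MeasureTheory.integral_const_mul _ _
  calc r ^ 2 * (∫ y in S2, (inner ℝ y (gradient f (x + r • y)) : ℝ) ∂(μH[2] : Measure E3))
      = r ^ 2 * ∫ y in S2, (∑ i : Fin 3, y i * G i (r • y)) ∂(μH[2] : Measure E3) := by
        rw [setIntegral_congr_fun measurableSet_S2 (fun y _ => hinner y)]
    _ = ∫ y in S2, (∑ i : Fin 3, r^2*(y i)*G i (r • y)) ∂(μH[2] : Measure E3) := by
        rw [← MeasureTheory.integral_const_mul]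
        apply setIntegral_congr_fun measurableSet_S2
        intro y _
        dsimp only
        rw [Finset.mul_sum]
        exact Finset.sum_congr rfl fun i _ => by ring
    _ = ∫ y in S2, (∫ s in Set.Ioc (0:ℝ) r, q s y) ∂(μH[2] : Measure E3) :=
        setIntegral_congr_fun measurableSet_S2 (fun y _ => hFTC y)
    _ = ∫ s in Set.Ioc (0:ℝ) r, (∫ y in S2, q s y ∂(μH[2] : Measure E3)) :=
        sphere_fubini r q hqcont
    _ = ∫ s in Set.Ioc (0:ℝ) r, (s ^ 2 * ∫ y in S2, lap f (x + s • y)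
          ∂(μH[2] : Measure E3)) :=
        setIntegral_congr_fun measurableSet_Ioc (fun s _ => hinner_s s)
    _ = ∫ s in (0:ℝ)..r, s ^ 2 * ∫ y in S2, lap f (x + s • y) ∂(μH[2] : Measure E3) :=
        (intervalIntegral.integral_of_le hr.le).symm

end Main
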